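/- Let H be a separable real Hilbert space with orthonormal basis (e_i) and dictionary D = {±e_i}. Let C = (c_p) be positive coefficients with ∑ c_p = ∞ and c_p → 0. Then for every f ∈ H, every greedy expansion of f with prescribed coefficients C and weakening parameter t = 1 converges to f, i.e., ‖f_n‖ → 0. -/

import Mathlib

open RealInnerProductSpace Filter

theorem stmt_7 (H : Type*) [NormedAddCommGroup H] [InnerProductSpace ℝ H]
    (e : HilbertBasis ℕ ℝ H)
    (D : Set H) (hD : D = Set.range (e : ℕ → H) ∪ Set.range (fun i => -(e i)))
    (c : ℕ → ℝ) (hc : ∀ p, 0 < c p)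
    (hcdiv : Tendsto (fun n => ∑ p ∈ Finset.range n, c p) atTop atTop)
    (hc0 : Tendsto c atTop (nhds 0))
    (f : H) (φ F : ℕ → H)
    (hφD : ∀ m, φ m ∈ D)
    (hF0 : F 0 = f)
    (hsel : ∀ m, ⟪F m, φ m⟫ = sSup ((fun g => ⟪F m, g⟫) '' D))
    (hrec : ∀ m, F (m + 1) = F m - c m • φ m) :
    Tendsto (fun n => ‖F n‖) atTop (nhds 0) := by
  classical
  -- the dictionary elements
  have hDcases : ∀ g ∈ D, ∃ i : ℕ, g = e i ∨ g = -(e i) := by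
    intro g hg
    rw [hD] at hg
    rcases hg with h | h
    · obtain ⟨i, hi⟩ := h; exact ⟨i, Or.inl hi.symm⟩
    · obtain ⟨i, hi⟩ := h; exact ⟨i, Or.inr hi.symm⟩
  have heD : ∀ i : ℕ, (e i : H) ∈ D := by
    intro i; rw [hD]; exact Or.inl ⟨i, rfl⟩
  have hneD : ∀ i : ℕ, (-(e i) : H) ∈ D := by
    intro i; rw [hD]; exact Or.inr ⟨i, rfl⟩
  have hφi : ∀ m, ∃ i : ℕ, φ m = e i ∨ φ m = -(e i) := fun m => hDcases (φ m) (hφD m)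
  choose idx hidx using hφi
  have hnorme : ∀ i : ℕ, ‖(e i : H)‖ = 1 := e.orthonormal.1
  have hDnorm : ∀ g ∈ D, ‖g‖ = 1 := by
    intro g hg
    obtain ⟨i, hi | hi⟩ := hDcases g hg
    · rw [hi]; exact hnorme i
    · rw [hi, norm_neg]; exact hnorme i
  have hee : ∀ i j : ℕ, ⟪(e i : H), e j⟫ = if i = j then (1:ℝ) else 0 :=
    orthonormal_iff_ite.mp e.orthonormal
  obtain ⟨x, hx⟩ : ∃ x : ℕ → ℕ → ℝ, ∀ n i, x n i = ⟪F n, e i⟫ := ⟨_, fun _ _ => rfl⟩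
  obtain ⟨a, ha⟩ : ∃ a : ℕ → ℝ, ∀ n, a n = ⟪F n, φ n⟫ := ⟨_, fun _ => rfl⟩
  obtain ⟨b, hb⟩ : ∃ b : ℕ → ℝ, ∀ n, b n = ‖F n‖ ^ 2 := ⟨_, fun _ => rfl⟩
  have hb0 : ∀ n, 0 ≤ b n := fun n => (hb n) ▸ sq_nonneg _
  have hbdd : ∀ n, BddAbove ((fun g => ⟪F n, g⟫) '' D) := by
    intro n
    refine ⟨‖F n‖, ?_⟩
    rintro y ⟨g, hg, rfl⟩
    have h1 := real_inner_le_norm (F n) g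
    rw [hDnorm g hg, mul_one] at h1
    exact h1
  have hmem : ∀ n, ∀ g ∈ D, ⟪F n, g⟫ ≤ a n := by
    intro n g hg
    rw [ha n, hsel n]
    exact le_csSup (hbdd n) ⟨g, hg, rfl⟩
  have habs : ∀ n i, |x n i| ≤ a n := by
    intro n i
    rw [abs_le]
    constructor
    · have h1 := hmem n (-(e i)) (hneD i)
      rw [inner_neg_right] at h1
      rw [hx n i]
      linarith
    · rw [hx n i]; exact hmem n (e i) (heD i)
  have ha0 : ∀ n, 0 ≤ a n := fun n => le_trans (abs_nonneg _) (habs n 0)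
  have hxrec : ∀ n i, x (n+1) i = x n i - c n * ⟪φ n, e i⟫ := by
    intro n i
    rw [hx (n+1) i, hx n i, hrec n, inner_sub_left, real_inner_smul_left]
  have hfreeze : ∀ n i, idx n ≠ i → x (n+1) i = x n i := by
    intro n i hne
    rw [hxrec n i]
    have h1 : ⟪φ n, e i⟫ = (0:ℝ) := by
      rcases hidx n with h | h
      · rw [h, hee (idx n) i, if_neg hne]
      · rw [h, inner_neg_left, hee (idx n) i, if_neg hne]; ring
    rw [h1]; ring
  have hsign : ∀ n, (x n (idx n) = a n ∧ x (n+1) (idx n) = a n - c n) ∨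
      (x n (idx n) = -(a n) ∧ x (n+1) (idx n) = -(a n - c n)) := by
    intro n
    rcases hidx n with h | h
    · left
      have h1 : x n (idx n) = a n := by rw [hx n (idx n), ha n, h]
      refine ⟨h1, ?_⟩
      rw [hxrec n (idx n), h, hee (idx n) (idx n), if_pos rfl, h1]; ring
    · right
      have h1 : x n (idx n) = -(a n) := by
        rw [hx n (idx n), ha n, h, inner_neg_right, neg_neg]
      refine ⟨h1, ?_⟩
      rw [hxrec n (idx n), h, inner_neg_left, hee (idx n) (idx n), if_pos rfl, h1]; ring
  have habs_sel : ∀ n, |x n (idx n)| = a n := by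
    intro n
    rcases hsign n with ⟨h1, _⟩ | ⟨h1, _⟩
    · rw [h1, abs_of_nonneg (ha0 n)]
    · rw [h1, abs_neg, abs_of_nonneg (ha0 n)]
  have habs_sel' : ∀ n, |x (n+1) (idx n)| = |a n - c n| := by
    intro n
    rcases hsign n with ⟨_, h2⟩ | ⟨_, h2⟩
    · rw [h2]
    · rw [h2, abs_neg]
  have hbrec : ∀ n, b (n+1) = b n - c n * (2 * a n - c n) := by
    intro n
    rw [hb (n+1), hb n, ha n, hrec n]
    rw [norm_sub_sq_real, real_inner_smul_right, norm_smul,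
      hDnorm (φ n) (hφD n), mul_one, Real.norm_eq_abs, sq_abs]
    ring
  have ha_next : ∀ n, a (n+1) ≤ max (a n) |a n - c n| := by
    intro n
    rw [ha (n+1), hsel (n+1)]
    have hne : ((fun g => ⟪F (n+1), g⟫) '' D).Nonempty := ⟨⟪F (n+1), e 0⟫, ⟨e 0, heD 0, rfl⟩⟩
    apply csSup_le hne
    rintro y ⟨g, hg, rfl⟩
    have key : ∀ i : ℕ, |x (n+1) i| ≤ max (a n) |a n - c n| := by
      intro i
      by_cases hii : idx n = i
      · rw [← hii, habs_sel' n]; exact le_max_right _ _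
      · rw [hfreeze n i hii]; exact le_trans (habs n i) (le_max_left _ _)
    obtain ⟨i, hi | hi⟩ := hDcases g hg
    · have hy : ⟪F (n+1), g⟫ ≤ |x (n+1) i| := by
        rw [hi, ← hx (n+1) i]; exact le_abs_self _
      exact le_trans hy (key i)
    · have hy : ⟪F (n+1), g⟫ ≤ |x (n+1) i| := by
        rw [hi, inner_neg_right, ← hx (n+1) i]
        exact le_trans (neg_le_abs _) (le_of_eq rfl)
      exact le_trans hy (key i)
  have hmono : ∀ n, b (n+1) - a (n+1)^2 ≤ b n - a n^2 := by
    intro n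
    have h1 : |a n - c n| ≤ a (n+1) := by
      rw [← habs_sel' n]; exact habs (n+1) (idx n)
    have h2 : (a n - c n)^2 ≤ a (n+1)^2 := by
      rw [← sq_abs (a n - c n)]
      exact pow_le_pow_left₀ (abs_nonneg _) h1 2
    have h3 := hbrec n
    nlinarith
  have hchain : ∀ k n, k ≤ n → b n - a n^2 ≤ b k - a k^2 := by
    intro k n hkn
    induction n, hkn using Nat.le_induction with
    | base => exact le_refl _
    | succ n hn ih => exact le_trans (hmono n) ih
  -- Step A : a tends to 0
  have haT : Tendsto a atTop (nhds 0) := by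
    rw [Metric.tendsto_atTop]
    intro ε hε
    obtain ⟨M₁, hM₁⟩ := (Metric.tendsto_atTop.mp hc0) ε hε
    have hM₁' : ∀ m, M₁ ≤ m → c m < ε := by
      intro m hm
      have h1 := hM₁ m hm
      rw [Real.dist_eq, sub_zero, abs_of_pos (hc m)] at h1
      exact h1
    have hex : ∃ m₀, M₁ ≤ m₀ ∧ a m₀ < ε := by
      by_contra hcon
      push_neg at hcon
      have hstep : ∀ m, M₁ ≤ m → b (m+1) ≤ b m - ε * c m := by
        intro m hm
        have h1 : ε ≤ a m := hcon m hm
        have h2 : c m < ε := hM₁' m hm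
        have h3 := hbrec m
        nlinarith [hc m]
      have hsumb : ∀ k, b (M₁ + k) ≤ b M₁ -
          ε * (∑ p ∈ Finset.range (M₁ + k), c p - ∑ p ∈ Finset.range M₁, c p) := by
        intro k
        induction k with
        | zero => simp
        | succ k ih =>
          have h4 := hstep (M₁ + k) (Nat.le_add_right _ _)
          have hs : M₁ + (k+1) = (M₁ + k) + 1 := by ring
          rw [hs, Finset.sum_range_succ]
          calc b ((M₁ + k) + 1) ≤ b (M₁ + k) - ε * c (M₁ + k) := h4
          _ ≤ (b M₁ - ε * (∑ p ∈ Finset.range (M₁ + k), c p - ∑ p ∈ Finset.range M₁, c p))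
              - ε * c (M₁ + k) := by linarith
          _ = b M₁ - ε * ((∑ p ∈ Finset.range (M₁ + k), c p + c (M₁ + k))
              - ∑ p ∈ Finset.range M₁, c p) := by ring
      have hbound : ∀ n, M₁ ≤ n → ∑ p ∈ Finset.range n, c p ≤
          ∑ p ∈ Finset.range M₁, c p + b M₁ / ε := by
        intro n hn
        obtain ⟨k, rfl⟩ := Nat.exists_eq_add_of_le hn
        have h1 := hsumb k
        have h2 := hb0 (M₁ + k)
        have h3 : (∑ p ∈ Finset.range (M₁ + k), c p - ∑ p ∈ Finset.range M₁, c p) * ε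
            ≤ b M₁ := by nlinarith
        have h4 := (le_div_iff₀ hε).mpr h3
        linarith
      obtain ⟨n, hn⟩ := ((hcdiv.eventually_gt_atTop
        (∑ p ∈ Finset.range M₁, c p + b M₁ / ε)).and (eventually_ge_atTop M₁)).exists
      exact absurd (hbound n hn.2) (not_le.mpr hn.1)
    obtain ⟨m₀, hm₀M, hm₀⟩ := hex
    have hper : ∀ n, m₀ ≤ n → a n < ε := by
      intro n hn
      induction n, hn using Nat.le_induction with
      | base => exact hm₀
      | succ n hn ih =>
        have h1 : c n < ε := hM₁' n (le_trans hm₀M hn)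
        have h2 : |a n - c n| < ε := abs_lt.mpr ⟨by linarith [hc n, ha0 n], by linarith [hc n]⟩
        exact lt_of_le_of_lt (ha_next n) (max_lt ih h2)
    refine ⟨m₀, fun n hn => ?_⟩
    rw [Real.dist_eq, sub_zero, abs_of_nonneg (ha0 n)]
    exact hper n hn
  -- Parseval
  have hsum : ∀ n, Summable (fun i => x n i ^ 2) := by
    intro n
    have h1 := e.summable_inner_mul_inner (F n) (F n)
    have h2 : ∀ i : ℕ, ⟪F n, e i⟫ * ⟪(e i : H), F n⟫ = x n i ^ 2 := by
      intro i; rw [real_inner_comm (F n) ((e : ℕ → H) i), ← hx n i]; ring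
    exact h1.congr h2
  have hpars : ∀ n, (∑' i, x n i ^ 2) = b n := by
    intro n
    have h1 := e.tsum_inner_mul_inner (F n) (F n)
    have h2 : ∀ i : ℕ, ⟪F n, e i⟫ * ⟪(e i : H), F n⟫ = x n i ^ 2 := by
      intro i; rw [real_inner_comm (F n) ((e : ℕ → H) i), ← hx n i]; ring
    rw [tsum_congr h2] at h1
    rw [h1, hb n]
    exact real_inner_self_eq_norm_sq (F n)
  have hfrozen : ∀ n i, (∀ m, m < n → idx m ≠ i) → x n i = x 0 i := by
    intro n
    induction n with
    | zero => intro i _; rfl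
    | succ n ih =>
      intro i h
      rw [hfreeze n i (h n (Nat.lt_succ_self n))]
      exact ih i (fun m hm => h m (Nat.lt_succ_of_lt hm))
  have hnever : ∀ i, (∀ m, idx m ≠ i) → x 0 i = 0 := by
    intro i h
    have h1 : ∀ n, |x 0 i| ≤ a n := by
      intro n
      rw [← hfrozen n i (fun m _ => h m)]
      exact habs n i
    have h2 : |x 0 i| ≤ 0 := ge_of_tendsto' haT h1
    exact abs_eq_zero.mp (le_antisymm h2 (abs_nonneg _))
  -- the untouched pool
  obtain ⟨r, hr⟩ : ∃ r : ℕ → ℝ, ∀ N,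
      r N = ∑' i, if (∀ m, m < N → idx m ≠ i) then x 0 i ^ 2 else 0 := ⟨_, fun _ => rfl⟩
  have hrsum : ∀ N, Summable (fun i => if (∀ m, m < N → idx m ≠ i) then x 0 i ^ 2 else 0) := by
    intro N
    apply Summable.of_nonneg_of_le (fun i => ?_) (fun i => ?_) (hsum 0)
    · split
      · exact sq_nonneg _
      · exact le_refl 0
    · split
      · exact le_refl _
      · exact sq_nonneg _
  have hr0 : Tendsto r atTop (nhds 0) := by
    have key := tendsto_tsum_of_dominated_convergence (𝓕 := atTop)
      (f := fun N i => if (∀ m, m < N → idx m ≠ i) then x 0 i ^ 2 else 0)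
      (g := fun _ : ℕ => (0:ℝ)) (bound := fun i => x 0 i ^ 2) (hsum 0) ?_ ?_
    · have h1 : (∑' _ : ℕ, (0:ℝ)) = 0 := tsum_zero
      rw [h1] at key
      refine key.congr fun N => ?_
      exact (hr N).symm
    · intro i
      by_cases hi : ∃ m, idx m = i
      · obtain ⟨m, hm⟩ := hi
        refine Tendsto.congr' ?_ tendsto_const_nhds
        filter_upwards [eventually_ge_atTop (m+1)] with N hN
        rw [if_neg]
        push_neg
        exact ⟨m, by omega, hm⟩
      · push_neg at hi
        have h2 : x 0 i = 0 := hnever i hi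
        simp [h2]
    · filter_upwards with N
      intro i
      rw [Real.norm_eq_abs]
      split
      · rw [abs_of_nonneg (sq_nonneg _)]
      · rw [abs_zero]; exact sq_nonneg _
  -- main estimate at running-minimum times
  have hmain : ∀ N n, N ≤ n → (∀ j, N ≤ j → j ≤ n → a n ≤ a j) →
      b n ≤ N * a n ^ 2 + r N := by
    intro N n hNn hmin
    set T : Finset ℕ := (Finset.range N).image idx with hTdef
    have hxsq : ∀ i, x n i ^ 2 ≤ a n ^ 2 := by
      intro i
      rw [← sq_abs (x n i)]
      exact pow_le_pow_left₀ (abs_nonneg _) (habs n i) 2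
    have hpoint : ∀ i, x n i ^ 2 ≤ (if i ∈ T then a n ^ 2 else 0)
        + (if (∀ m, m < N → idx m ≠ i) then x 0 i ^ 2 else 0) := by
      intro i
      by_cases hiT : i ∈ T
      · rw [if_pos hiT]
        have h2 : (0:ℝ) ≤ if (∀ m, m < N → idx m ≠ i) then x 0 i ^ 2 else 0 := by
          split
          · exact sq_nonneg _
          · exact le_refl 0
        linarith [hxsq i]
      · have hiN : ∀ m, m < N → idx m ≠ i := by
          intro m hm hEq
          exact hiT (Finset.mem_image.mpr ⟨m, Finset.mem_range.mpr hm, hEq⟩)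
        rw [if_neg hiT, if_pos hiN, zero_add]
        by_cases hT2 : ∀ m, m < n → idx m ≠ i
        · rw [hfrozen n i hT2]
        · push_neg at hT2
          have hex2 : ∃ m, m < n ∧ idx m = i := hT2
          obtain ⟨hm₀n, hm₀i⟩ := Nat.find_spec hex2
          set m₀ := Nat.find hex2 with hm₀def
          have hm₀min : ∀ k, k < m₀ → idx k ≠ i := by
            intro k hk hEq
            exact (Nat.find_min hex2 hk) ⟨lt_trans hk hm₀n, hEq⟩
          have hm₀N : N ≤ m₀ := by
            by_contra hlt
            push_neg at hlt
            exact hiN m₀ hlt hm₀i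
          have hx0 : x 0 i = x m₀ i := (hfrozen m₀ i hm₀min).symm
          have hxa : |x m₀ i| = a m₀ := by
            rw [← hm₀i]; exact habs_sel m₀
          have h5 : a n ≤ a m₀ := hmin m₀ hm₀N (le_of_lt hm₀n)
          calc x n i ^ 2 ≤ a n ^ 2 := hxsq i
          _ ≤ a m₀ ^ 2 := pow_le_pow_left₀ (ha0 n) h5 2
          _ = |x m₀ i| ^ 2 := by rw [hxa]
          _ = x m₀ i ^ 2 := sq_abs _
          _ = x 0 i ^ 2 := by rw [hx0]
    have hs1 : Summable (fun i => if i ∈ T then a n ^ 2 else 0) :=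
      summable_of_ne_finset_zero (s := T) (fun i hi => if_neg hi)
    have hs2 := hrsum N
    have hcalc : b n ≤ (∑' i, if i ∈ T then a n ^ 2 else 0) + r N := by
      rw [← hpars n, hr N, ← Summable.tsum_add hs1 hs2]
      exact Summable.tsum_le_tsum hpoint (hsum n) (hs1.add hs2)
    have hT1 : (∑' i, if i ∈ T then a n ^ 2 else 0) = ∑ i ∈ T, a n ^ 2 := by
      rw [tsum_eq_sum (s := T) (fun i hi => if_neg hi)]
      exact Finset.sum_congr rfl (fun i hi => if_pos hi)
    have hT2 : (∑ i ∈ T, a n ^ 2 : ℝ) ≤ N * a n ^ 2 := by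
      rw [Finset.sum_const, nsmul_eq_mul]
      apply mul_le_mul_of_nonneg_right _ (sq_nonneg _)
      have hcard : T.card ≤ N := le_trans Finset.card_image_le (le_of_eq (Finset.card_range N))
      exact_mod_cast hcard
    linarith
  -- conclusion
  rw [Metric.tendsto_atTop]
  intro ε hε
  have hδ : (0:ℝ) < ε ^ 2 / 4 := by positivity
  obtain ⟨N, hN⟩ : ∃ N, r N < ε ^ 2 / 4 := (hr0.eventually (gt_mem_nhds hδ)).exists
  have haT2 : Tendsto (fun n => a n ^ 2) atTop (nhds 0) := by
    have h1 := haT.mul haT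
    rw [mul_zero] at h1
    refine h1.congr fun n => ?_
    ring
  have hδ2 : (0:ℝ) < ε ^ 2 / (4 * (N + 1)) := by positivity
  obtain ⟨M, hM⟩ := ((haT2.eventually (gt_mem_nhds hδ2)).and (eventually_ge_atTop N)).exists
  obtain ⟨n₀, hn₀mem, hn₀min⟩ := Finset.exists_min_image (Finset.Icc N M) a
    ⟨M, Finset.mem_Icc.mpr ⟨hM.2, le_refl M⟩⟩
  rw [Finset.mem_Icc] at hn₀mem
  have hbn₀ : b n₀ ≤ N * a n₀ ^ 2 + r N :=
    hmain N n₀ hn₀mem.1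
      (fun j hj1 hj2 => hn₀min j (Finset.mem_Icc.mpr ⟨hj1, le_trans hj2 hn₀mem.2⟩))
  have han₀ : a n₀ ≤ a M := hn₀min M (Finset.mem_Icc.mpr ⟨hM.2, le_refl M⟩)
  have h6 : (N:ℝ) * a n₀ ^ 2 ≤ ε ^ 2 / 4 := by
    have h7 : a n₀ ^ 2 ≤ a M ^ 2 := pow_le_pow_left₀ (ha0 n₀) han₀ 2
    have h8 := hM.1
    have h9 : (N:ℝ) * a n₀ ^ 2 ≤ N * (ε ^ 2 / (4 * (N + 1))) :=
      mul_le_mul_of_nonneg_left (le_trans h7 (le_of_lt h8)) (Nat.cast_nonneg N)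
    have h10 : (N:ℝ) * (ε ^ 2 / (4 * (N + 1))) = ε ^ 2 * N / (4 * (N + 1)) := by ring
    have h11 : ε ^ 2 * N / (4 * (N + 1)) ≤ ε ^ 2 / 4 := by
      rw [div_le_div_iff₀ (by positivity) (by norm_num)]
      nlinarith [sq_nonneg ε, Nat.cast_nonneg (α := ℝ) N]
    linarith
  have hb2 : b n₀ ≤ ε ^ 2 / 2 := by linarith
  obtain ⟨K, hK⟩ := eventually_atTop.mp (haT2.eventually (gt_mem_nhds hδ))
  refine ⟨max n₀ K, fun k hk => ?_⟩
  have hk1 : n₀ ≤ k := le_trans (le_max_left _ _) hk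
  have hk2 : K ≤ k := le_trans (le_max_right _ _) hk
  have h9 := hchain n₀ k hk1
  have h10 : a k ^ 2 < ε ^ 2 / 4 := hK k hk2
  have hbk : b k < ε ^ 2 := by nlinarith [sq_nonneg (a n₀)]
  rw [Real.dist_eq, sub_zero, abs_of_nonneg (norm_nonneg _)]
  have hbk' : ‖F k‖ ^ 2 < ε ^ 2 := by rw [← hb k]; exact hbk
  nlinarith [norm_nonneg (F k)]
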